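/- Let a, b, c, d be positive integers. The pair (X, Oz) associated to the complex surface V = {(x,y,z) ∈ ℂ³ : y^a = z^b·x^c + x^d} is Whitney (b)-regular at the origin if and only if a = 1 or d ≤ c. -/

import Mathlib

open Filter

noncomputable section

/-- x-partial derivative of f(x,y,z) = y^a - z^b*x^c - x^d. -/
def fxC (b c d : ℕ) (x z : ℂ) : ℂ :=
  -(c : ℂ) * z ^ b * x ^ (c - 1) - (d : ℂ) * x ^ (d - 1)

/-- y-partial derivative of f. -/
def fyC (a : ℕ) (y : ℂ) : ℂ := (a : ℂ) * y ^ (a - 1)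

/-- z-partial derivative of f. -/
def fzC (b c : ℕ) (x z : ℂ) : ℂ := -(b : ℂ) * z ^ (b - 1) * x ^ c

/-- Hermitian norm on ℂ³. -/
def nrm3C (u v w : ℂ) : ℝ := Real.sqrt (‖u‖ ^ 2 + ‖v‖ ^ 2 + ‖w‖ ^ 2)

/-- Hermitian norm on ℂ². -/
def nrm2C (u v : ℂ) : ℝ := Real.sqrt (‖u‖ ^ 2 + ‖v‖ ^ 2)

/-- Norm of the gradient ∇f(x,y,z). -/
def gradNormC (a b c d : ℕ) (x y z : ℂ) : ℝ :=
  nrm3C (fxC b c d x z) (fyC a y) (fzC b c x z)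

/-- The gradient ∇f(x,y,z) is nonzero. -/
def gradNeC (a b c d : ℕ) (x y z : ℂ) : Prop :=
  ¬ (fxC b c d x z = 0 ∧ fyC a y = 0 ∧ fzC b c x z = 0)

/-- Membership in X = V \ Oz, where V = {y^a = z^b x^c + x^d} and Oz is the z-axis. -/
def inXC (a b c d : ℕ) (x y z : ℂ) : Prop :=
  y ^ a = z ^ b * x ^ c + x ^ d ∧ ¬ (x = 0 ∧ y = 0)

/-- Whitney (a)-regularity of the pair (X, Oz) at the origin. -/
def aRegC (a b c d : ℕ) : Prop :=
  ∀ x y z : ℕ → ℂ,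
    (∀ n, inXC a b c d (x n) (y n) (z n)) →
    Tendsto (fun n => (x n, y n, z n)) atTop (nhds ((0 : ℂ), (0 : ℂ), (0 : ℂ))) →
    (∀ n, gradNeC a b c d (x n) (y n) (z n)) →
    Tendsto (fun n => ‖fzC b c (x n) (z n)‖ / gradNormC a b c d (x n) (y n) (z n))
      atTop (nhds 0)

/-- The (bᵖⁱ) condition for the retraction π(x,y,z) = (0,0,z). -/
def bpiC (a b c d : ℕ) : Prop :=
  ∀ x y z : ℕ → ℂ,
    (∀ n, inXC a b c d (x n) (y n) (z n)) →
    Tendsto (fun n => (x n, y n, z n)) atTop (nhds ((0 : ℂ), (0 : ℂ), (0 : ℂ))) →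
    (∀ n, gradNeC a b c d (x n) (y n) (z n)) →
    Tendsto (fun n => ‖x n * fxC b c d (x n) (z n) + y n * fyC a (y n)‖ /
        (nrm2C (x n) (y n) * gradNormC a b c d (x n) (y n) (z n)))
      atTop (nhds 0)

/-- Whitney (b)-regularity of the pair (X, Oz) at the origin. -/
def bRegC (a b c d : ℕ) : Prop := aRegC a b c d ∧ bpiC a b c d

/-- Kuo–Verdier (w)-regularity of the pair (X, Oz) at the origin. -/
def wRegC (a b c d : ℕ) : Prop :=
  ∃ C : ℝ, 0 < C ∧ ∃ ε : ℝ, 0 < ε ∧ ∀ x y z : ℂ,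
    inXC a b c d x y z → nrm3C x y z < ε → gradNeC a b c d x y z →
    ‖fzC b c x z‖ ≤ C * nrm2C x y * gradNormC a b c d x y z

/-! ### Auxiliary norm lemmas -/

private lemma nrm3C_nonneg' (u v w : ℂ) : 0 ≤ nrm3C u v w := Real.sqrt_nonneg _

private lemma nrm2C_nonneg' (u v : ℂ) : 0 ≤ nrm2C u v := Real.sqrt_nonneg _

private lemma le_nrm3_1 (u v w : ℂ) : ‖u‖ ≤ nrm3C u v w := by
  calc ‖u‖ = Real.sqrt (‖u‖^2) := (Real.sqrt_sq (norm_nonneg u)).symm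
    _ ≤ nrm3C u v w := Real.sqrt_le_sqrt (by nlinarith [sq_nonneg ‖v‖, sq_nonneg ‖w‖])

private lemma le_nrm3_2 (u v w : ℂ) : ‖v‖ ≤ nrm3C u v w := by
  calc ‖v‖ = Real.sqrt (‖v‖^2) := (Real.sqrt_sq (norm_nonneg v)).symm
    _ ≤ nrm3C u v w := Real.sqrt_le_sqrt (by nlinarith [sq_nonneg ‖u‖, sq_nonneg ‖w‖])

private lemma le_nrm3_3 (u v w : ℂ) : ‖w‖ ≤ nrm3C u v w := by
  calc ‖w‖ = Real.sqrt (‖w‖^2) := (Real.sqrt_sq (norm_nonneg w)).symm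
    _ ≤ nrm3C u v w := Real.sqrt_le_sqrt (by nlinarith [sq_nonneg ‖u‖, sq_nonneg ‖v‖])

private lemma le_nrm2_1 (u v : ℂ) : ‖u‖ ≤ nrm2C u v := by
  calc ‖u‖ = Real.sqrt (‖u‖^2) := (Real.sqrt_sq (norm_nonneg u)).symm
    _ ≤ nrm2C u v := Real.sqrt_le_sqrt (by nlinarith [sq_nonneg ‖v‖])

private lemma le_nrm2_2 (u v : ℂ) : ‖v‖ ≤ nrm2C u v := by
  calc ‖v‖ = Real.sqrt (‖v‖^2) := (Real.sqrt_sq (norm_nonneg v)).symm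
    _ ≤ nrm2C u v := Real.sqrt_le_sqrt (by nlinarith [sq_nonneg ‖u‖])

private lemma fx_le_grad (a b c d : ℕ) (x y z : ℂ) :
    ‖fxC b c d x z‖ ≤ gradNormC a b c d x y z := le_nrm3_1 _ _ _

private lemma fy_le_grad (a b c d : ℕ) (x y z : ℂ) :
    ‖fyC a y‖ ≤ gradNormC a b c d x y z := le_nrm3_2 _ _ _

private lemma fz_le_grad (a b c d : ℕ) (x y z : ℂ) :
    ‖fzC b c x z‖ ≤ gradNormC a b c d x y z := le_nrm3_3 _ _ _

/-! ### Elementary real lemmas -/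

private lemma sqrt_step (T ρ V : ℝ) (hT : 0 ≤ T) (hρ : 0 ≤ ρ) (hV : 0 ≤ V)
    (h : T^2 ≤ 2*ρ*V^2) : T ≤ Real.sqrt (2*ρ) * V := by
  calc T = Real.sqrt (T^2) := (Real.sqrt_sq hT).symm
    _ ≤ Real.sqrt (2*ρ*V^2) := Real.sqrt_le_sqrt h
    _ = Real.sqrt (2*ρ) * V := by
        rw [Real.sqrt_mul (by positivity), Real.sqrt_sq hV]

private lemma root_step (K U V : ℝ) (a : ℕ) (ha : 0 < a) (hU : 0 ≤ U) (hV : 0 ≤ V)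
    (hK : 0 ≤ K) (hpow : U^a ≤ K * V^a) : U ≤ K^(((a:ℕ):ℝ)⁻¹) * V := by
  have haR : ((a:ℕ):ℝ) ≠ 0 := Nat.cast_ne_zero.mpr ha.ne'
  have h1 : ((U^a : ℝ))^(((a:ℕ):ℝ)⁻¹) ≤ ((K * V^a))^(((a:ℕ):ℝ)⁻¹) :=
    Real.rpow_le_rpow (by positivity) hpow (by positivity)
  rw [← Real.rpow_natCast U a, ← Real.rpow_mul hU, mul_inv_cancel₀ haR, Real.rpow_one] at h1
  rw [Real.mul_rpow hK (by positivity), ← Real.rpow_natCast V a, ← Real.rpow_mul hV,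
    mul_inv_cancel₀ haR, Real.rpow_one] at h1
  exact h1

private lemma div_bound (A2 td Q P cc D : ℝ) (hA2 : 0 ≤ A2) (hQ : 0 ≤ Q)
    (hcc : 0 < cc) (hD : 0 < D) (h1 : td ≤ Q * P) (h2 : cc * P ≤ D) :
    A2 * td / D ≤ (A2/cc) * Q := by
  rw [div_le_iff₀ hD]
  calc A2 * td ≤ A2 * (Q*P) := mul_le_mul_of_nonneg_left h1 hA2
    _ = (A2/cc)*Q*(cc*P) := by field_simp
    _ ≤ (A2/cc)*Q*D := mul_le_mul_of_nonneg_left h2 (by positivity)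

/-- Case d < a : `(t s^{a-1})^a ≤ 2^{a-2} t^{2(a-d)} (s t^{d-1})^a`, written
with `d = d1+1`, `a = d1+e+2`. -/
private lemma pow_ineq_gt (t s : ℝ) (d1 e : ℕ) (ht : 0 ≤ t) (hs : 0 ≤ s)
    (hsh : s^(d1+e+2) ≤ 2*t^(d1+1)) :
    (t*s^(d1+e+1))^(d1+e+2) ≤ 2^(d1+e) * t^(2*e+2) * (s*t^d1)^(d1+e+2) := by
  have e2 : (s^(d1+e+2))^(d1+e) ≤ (2*t^(d1+1))^(d1+e) :=
    pow_le_pow_left₀ (by positivity) hsh _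
  calc (t*s^(d1+e+1))^(d1+e+2) = t^(d1+e+2) * ((s^(d1+e+2))^(d1+e) * s^(d1+e+2)) := by ring
    _ ≤ t^(d1+e+2) * ((2*t^(d1+1))^(d1+e) * s^(d1+e+2)) := by
        refine mul_le_mul_of_nonneg_left ?_ (by positivity)
        exact mul_le_mul_of_nonneg_right e2 (by positivity)
    _ = 2^(d1+e) * t^(2*e+2) * (s*t^d1)^(d1+e+2) := by ring

/-- Case a < d : `(s t^{d-1})^a ≤ 2^{a-2} t^{2(d-a)} (t s^{a-1})^a`, written
with `a = k+2`, `d = k+m+3`. -/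
private lemma pow_ineq_lt (t s : ℝ) (k m : ℕ) (ht : 0 ≤ t) (hs : 0 ≤ s)
    (hsl : t^(k+m+3) ≤ 2*s^(k+2)) :
    (s*t^(k+m+2))^(k+2) ≤ 2^k * t^(2*m+2) * (t*s^(k+1))^(k+2) := by
  have e2 : (t^(k+m+3))^k ≤ (2*s^(k+2))^k := pow_le_pow_left₀ (by positivity) hsl _
  calc (s*t^(k+m+2))^(k+2) = (t^(k+m+3))^k * (s^(k+2) * t^(k+2*m+4)) := by ring
    _ ≤ (2*s^(k+2))^k * (s^(k+2) * t^(k+2*m+4)) := by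
        exact mul_le_mul_of_nonneg_right e2 (by positivity)
    _ = 2^k * t^(2*m+2) * (t*s^(k+1))^(k+2) := by ring

private lemma td_le_gt (t s : ℝ) (d1 e : ℕ) (ht : 0 < t) (hs : 0 < s)
    (hslow : t^(d1+1) ≤ 2*s^(d1+e+2)) (hshigh : s^(d1+e+2) ≤ 2*t^(d1+1)) :
    t^(d1+1) ≤ Real.sqrt (2*(2^(d1+e)*t^(2*e+2))^(((d1+e+2:ℕ):ℝ)⁻¹)) * (s*t^d1) := by
  have hpow := pow_ineq_gt t s d1 e ht.le hs.le hshigh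
  have hroot : t*s^(d1+e+1) ≤ (2^(d1+e)*t^(2*e+2))^(((d1+e+2:ℕ):ℝ)⁻¹) * (s*t^d1) :=
    root_step _ _ _ _ (by omega) (by positivity) (by positivity) (by positivity) hpow
  have hsq : (t^(d1+1))^2 ≤ 2*((2^(d1+e)*t^(2*e+2))^(((d1+e+2:ℕ):ℝ)⁻¹)) * (s*t^d1)^2 := by
    calc (t^(d1+1))^2 = t^(d1+1) * t^(d1+1) := pow_two _
      _ ≤ t^(d1+1) * (2*s^(d1+e+2)) :=
          mul_le_mul_of_nonneg_left hslow (by positivity)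
      _ = 2*((t*s^(d1+e+1)) * (s*t^d1)) := by ring
      _ ≤ 2*(((2^(d1+e)*t^(2*e+2))^(((d1+e+2:ℕ):ℝ)⁻¹) * (s*t^d1)) * (s*t^d1)) := by
          refine mul_le_mul_of_nonneg_left ?_ (by norm_num)
          exact mul_le_mul_of_nonneg_right hroot (by positivity)
      _ = 2*((2^(d1+e)*t^(2*e+2))^(((d1+e+2:ℕ):ℝ)⁻¹)) * (s*t^d1)^2 := by ring
  exact sqrt_step _ _ _ (by positivity) (by positivity) (by positivity) hsq

private lemma td_le_lt (t s : ℝ) (k m : ℕ) (ht : 0 < t) (hs : 0 < s)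
    (hslow : t^(k+m+3) ≤ 2*s^(k+2)) :
    t^(k+m+3) ≤ Real.sqrt (2*(2^k*t^(2*m+2))^(((k+2:ℕ):ℝ)⁻¹)) * (t*s^(k+1)) := by
  have hpow := pow_ineq_lt t s k m ht.le hs.le hslow
  have hroot : s*t^(k+m+2) ≤ (2^k*t^(2*m+2))^(((k+2:ℕ):ℝ)⁻¹) * (t*s^(k+1)) :=
    root_step _ _ _ _ (by omega) (by positivity) (by positivity) (by positivity) hpow
  have hsq : (t^(k+m+3))^2 ≤ 2*((2^k*t^(2*m+2))^(((k+2:ℕ):ℝ)⁻¹)) * (t*s^(k+1))^2 := by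
    calc (t^(k+m+3))^2 = t^(k+m+3) * t^(k+m+3) := pow_two _
      _ ≤ (2*s^(k+2)) * t^(k+m+3) :=
          mul_le_mul_of_nonneg_right hslow (by positivity)
      _ = 2*((s*t^(k+m+2)) * (t*s^(k+1))) := by ring
      _ ≤ 2*(((2^k*t^(2*m+2))^(((k+2:ℕ):ℝ)⁻¹) * (t*s^(k+1))) * (t*s^(k+1))) := by
          refine mul_le_mul_of_nonneg_left ?_ (by norm_num)
          exact mul_le_mul_of_nonneg_right hroot (by positivity)
      _ = 2*((2^k*t^(2*m+2))^(((k+2:ℕ):ℝ)⁻¹)) * (t*s^(k+1))^2 := by ring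
  exact sqrt_step _ _ _ (by positivity) (by positivity) (by positivity) hsq

/-- p := w^b * t^(c-d) is controlled by t + w. -/
private lemma p_le_tw (b c d : ℕ) (hb : 0 < b) (hdc : d ≤ c) (t w : ℝ) (ht0 : 0 ≤ t)
    (hw0 : 0 ≤ w) (ht1 : t ≤ 1) (hw1 : w ≤ 1) : w^b * t^(c-d) ≤ t + w := by
  rcases Nat.eq_or_lt_of_le hdc with h | h
  · have hcd : c - d = 0 := by omega
    rw [hcd, pow_zero, mul_one]
    have h1 : w^b ≤ w^1 := pow_le_pow_of_le_one hw0 hw1 hb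
    rw [pow_one] at h1
    linarith
  · have h1 : t^(c-d) ≤ t^1 := pow_le_pow_of_le_one ht0 ht1 (by omega)
    rw [pow_one] at h1
    have h2 : w^b ≤ 1 := pow_le_one₀ hw0 hw1
    nlinarith [pow_nonneg ht0 (c-d), pow_nonneg hw0 b]

private lemma x_ne_zero_of_inX (a b c d : ℕ) (ha : 0 < a) (hc : 0 < c) (hd : 0 < d)
    (X Y Z : ℂ) (h : inXC a b c d X Y Z) : X ≠ 0 := by
  intro hx0
  rcases h with ⟨hV, hne⟩
  apply hne
  refine ⟨hx0, ?_⟩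
  have hY : Y ^ a = 0 := by
    rw [hV, hx0, zero_pow hc.ne', zero_pow hd.ne', mul_zero, add_zero]
  exact (pow_eq_zero_iff ha.ne').mp hY

/-- Core per-point estimates in the case d ≤ c. -/
private lemma core_dc (a b c d : ℕ) (ha : 0 < a) (hb : 0 < b) (hc : 0 < c) (hd : 0 < d)
    (hdc : d ≤ c) (X Y Z : ℂ) (hV : Y ^ a = Z ^ b * X ^ c + X ^ d)
    (hsm : (c:ℝ) * (‖Z‖^b * ‖X‖^(c-d)) ≤ (d:ℝ)/2)
    (hsm2 : ‖Z‖^b * ‖X‖^(c-d) ≤ 1/2) :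
    ((d:ℝ)/2 * ‖X‖^(d-1) ≤ ‖fxC b c d X Z‖) ∧ (‖X‖^d ≤ 2*‖Y‖^a) ∧ (‖Y‖^a ≤ 2*‖X‖^d) := by
  have hAnorm : ‖(c:ℂ) * Z^b * X^(c-d)‖ = (c:ℝ) * (‖Z‖^b * ‖X‖^(c-d)) := by
    rw [norm_mul, norm_mul, norm_pow, norm_pow, Complex.norm_natCast, mul_assoc]
  have hfxeq : fxC b c d X Z = -(X^(d-1) * ((c:ℂ) * Z^b * X^(c-d) + (d:ℂ))) := by
    rw [fxC, show c - 1 = (c-d) + (d-1) by omega, pow_add]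
    ring
  have hdlow : (d:ℝ)/2 ≤ ‖(c:ℂ) * Z^b * X^(c-d) + (d:ℂ)‖ := by
    have h1 := norm_sub_le ((c:ℂ) * Z^b * X^(c-d) + (d:ℂ)) ((c:ℂ) * Z^b * X^(c-d))
    rw [add_sub_cancel_left, hAnorm, Complex.norm_natCast] at h1
    linarith
  have hfx : (d:ℝ)/2 * ‖X‖^(d-1) ≤ ‖fxC b c d X Z‖ := by
    rw [hfxeq, norm_neg, norm_mul, norm_pow]
    calc (d:ℝ)/2 * ‖X‖^(d-1)
        ≤ ‖(c:ℂ) * Z^b * X^(c-d) + (d:ℂ)‖ * ‖X‖^(d-1) :=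
          mul_le_mul_of_nonneg_right hdlow (by positivity)
      _ = ‖X‖^(d-1) * ‖(c:ℂ) * Z^b * X^(c-d) + (d:ℂ)‖ := mul_comm _ _
  have hXc : X^c = X^(c-d) * X^d := by rw [← pow_add]; congr 1; omega
  have hYeq : Y ^ a = X^d * (Z^b * X^(c-d) + 1) := by rw [hV, hXc]; ring
  have hQn : ‖Z^b * X^(c-d)‖ = ‖Z‖^b * ‖X‖^(c-d) := by rw [norm_mul, norm_pow, norm_pow]
  have hYn : ‖Y‖^a = ‖X‖^d * ‖Z^b*X^(c-d) + 1‖ := by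
    rw [← norm_pow, ← norm_pow, ← norm_mul, hYeq]
  have h1le : ‖Z^b*X^(c-d) + 1‖ ≤ 2 := by
    calc ‖Z^b*X^(c-d) + 1‖ ≤ ‖Z^b*X^(c-d)‖ + ‖(1:ℂ)‖ := norm_add_le _ _
      _ ≤ 1/2 + 1 := by rw [hQn, norm_one]; linarith
      _ ≤ 2 := by norm_num
  have h1ge : (1:ℝ)/2 ≤ ‖Z^b*X^(c-d) + 1‖ := by
    have h1 := norm_sub_le (Z^b*X^(c-d) + 1) (Z^b*X^(c-d))
    rw [add_sub_cancel_left, hQn, norm_one] at h1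
    linarith
  refine ⟨hfx, ?_, ?_⟩
  · nlinarith [pow_nonneg (norm_nonneg X) d]
  · nlinarith [pow_nonneg (norm_nonneg X) d]

/-! ### (a)-regularity in the case d ≤ c -/

private lemma aReg_dc (a b c d : ℕ) (ha : 0 < a) (hb : 0 < b) (hc : 0 < c) (hd : 0 < d)
    (hdc : d ≤ c) : aRegC a b c d := by
  intro x y z hX hlim hgrad
  have hxn : Tendsto (fun n => ‖x n‖) atTop (nhds 0) := by
    simpa using ((continuous_fst.tendsto _).comp hlim).norm
  have hzn : Tendsto (fun n => ‖z n‖) atTop (nhds 0) := by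
    simpa using (((continuous_snd.comp continuous_snd).tendsto _).comp hlim).norm
  have hxne : ∀ n, x n ≠ 0 := fun n => x_ne_zero_of_inX a b c d ha hc hd _ _ _ (hX n)
  have hdR : (0:ℝ) < (d:ℝ) := by exact_mod_cast hd
  have hcR : (0:ℝ) < (c:ℝ) := by exact_mod_cast hc
  set δ : ℝ := min 1 (min (4:ℝ)⁻¹ ((d:ℝ)/(4*c))) with hδdef
  have hδpos : 0 < δ := by
    apply lt_min (by norm_num)
    exact lt_min (by norm_num) (by positivity)
  have hevx : ∀ᶠ n in atTop, ‖x n‖ < δ := hxn.eventually (gt_mem_nhds hδpos)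
  have hevz : ∀ᶠ n in atTop, ‖z n‖ < δ := hzn.eventually (gt_mem_nhds hδpos)
  apply squeeze_zero' (g := fun n => 2*(b:ℝ)/(d:ℝ) * ‖x n‖)
  · filter_upwards with n
    exact div_nonneg (norm_nonneg _) (nrm3C_nonneg' _ _ _)
  · filter_upwards [hevx, hevz] with n hxδ hzδ
    obtain ⟨hV, -⟩ := hX n
    set X := x n with hXdef
    set Y := y n with hYdef
    set Z := z n with hZdef
    set t : ℝ := ‖X‖ with htdef
    set w : ℝ := ‖Z‖ with hwdef
    have ht0 : 0 < t := norm_pos_iff.mpr (hxne n)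
    have hw0 : (0:ℝ) ≤ w := norm_nonneg _
    have ht1 : t ≤ 1 := le_trans hxδ.le (min_le_left _ _)
    have hw1 : w ≤ 1 := le_trans hzδ.le (min_le_left _ _)
    have hδd : δ ≤ (d:ℝ)/(4*c) := le_trans (min_le_right _ _) (min_le_right _ _)
    have hδq : δ ≤ (4:ℝ)⁻¹ := le_trans (min_le_right _ _) (min_le_left _ _)
    have hpw : w^b * t^(c-d) ≤ t + w := p_le_tw b c d hb hdc _ _ ht0.le hw0 ht1 hw1
    have hsm2 : w^b * t^(c-d) ≤ 1/2 := by
      have h0 : t + w ≤ 2*δ := by linarith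
      nlinarith
    have hsm : (c:ℝ) * (w^b * t^(c-d)) ≤ (d:ℝ)/2 := by
      have h1 : (c:ℝ) * (w^b * t^(c-d)) ≤ (c:ℝ) * (t + w) :=
        mul_le_mul_of_nonneg_left hpw (le_of_lt hcR)
      have h2 : t + w ≤ 2*((d:ℝ)/(4*c)) := by linarith
      have h3 : (c:ℝ) * (2*((d:ℝ)/(4*c))) = (d:ℝ)/2 := by field_simp; ring
      nlinarith
    obtain ⟨hfx, -, -⟩ := core_dc a b c d ha hb hc hd hdc X Y Z hV hsm hsm2
    set G := gradNormC a b c d X Y Z with hGdef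
    have hfxG : ‖fxC b c d X Z‖ ≤ G := fx_le_grad a b c d X Y Z
    have hGpos : 0 < G := by
      have h0 : (0:ℝ) < (d:ℝ)/2 * t^(d-1) := by positivity
      exact lt_of_lt_of_le (lt_of_lt_of_le h0 hfx) hfxG
    rw [div_le_iff₀ hGpos]
    have hfzn : ‖fzC b c X Z‖ = (b:ℝ) * (w^(b-1) * t^c) := by
      rw [fzC, norm_mul, norm_mul, norm_neg, Complex.norm_natCast, norm_pow, norm_pow, mul_assoc]
    have htc : t^c = t^(c-d) * (t^(d-1) * t) := by
      rw [← pow_succ, ← pow_add]; congr 1; omega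
    have hfz1 : ‖fzC b c X Z‖ ≤ (b:ℝ) * (t^(d-1) * t) := by
      rw [hfzn, htc]
      have q1 : (0:ℝ) ≤ t^(d-1)*t := by positivity
      have q2 : t^(c-d)*(t^(d-1)*t) ≤ t^(d-1)*t := by
        calc t^(c-d)*(t^(d-1)*t) ≤ 1*(t^(d-1)*t) :=
              mul_le_mul_of_nonneg_right (pow_le_one₀ ht0.le ht1) q1
          _ = t^(d-1)*t := one_mul _
      have q3 : w^(b-1)*(t^(c-d)*(t^(d-1)*t)) ≤ t^(c-d)*(t^(d-1)*t) := by
        calc w^(b-1)*(t^(c-d)*(t^(d-1)*t)) ≤ 1*(t^(c-d)*(t^(d-1)*t)) :=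
              mul_le_mul_of_nonneg_right (pow_le_one₀ hw0 hw1) (by positivity)
          _ = t^(c-d)*(t^(d-1)*t) := one_mul _
      have q4 : w^(b-1)*(t^(c-d)*(t^(d-1)*t)) ≤ t^(d-1)*t := le_trans q3 q2
      exact mul_le_mul_of_nonneg_left q4 (Nat.cast_nonneg b)
    have h5 : (d:ℝ)/2 * t^(d-1) ≤ G := le_trans hfx hfxG
    have h6 : t^(d-1) ≤ 2/(d:ℝ)*G := by
      rw [show t^(d-1) = 2/(d:ℝ)*((d:ℝ)/2*t^(d-1)) from by field_simp]
      exact mul_le_mul_of_nonneg_left h5 (by positivity)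
    calc ‖fzC b c X Z‖ ≤ (b:ℝ) * (t^(d-1) * t) := hfz1
      _ ≤ (b:ℝ) * ((2/(d:ℝ)*G) * t) := by
          refine mul_le_mul_of_nonneg_left ?_ (Nat.cast_nonneg b)
          exact mul_le_mul_of_nonneg_right h6 ht0.le
      _ = 2*(b:ℝ)/(d:ℝ) * t * G := by ring
  · have h7 : Tendsto (fun n => 2*(b:ℝ)/(d:ℝ) * ‖x n‖) atTop (nhds (2*(b:ℝ)/(d:ℝ) * 0)) :=
      hxn.const_mul _
    simpa using h7

/-! ### the case a = 1 -/

private lemma aReg_a1 (b c d : ℕ) (hb : 0 < b) (hc : 0 < c) (hd : 0 < d) :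
    aRegC 1 b c d := by
  intro x y z hX hlim hgrad
  have hxn : Tendsto (fun n => ‖x n‖) atTop (nhds 0) := by
    simpa using ((continuous_fst.tendsto _).comp hlim).norm
  have hzn : Tendsto (fun n => ‖z n‖) atTop (nhds 0) := by
    simpa using (((continuous_snd.comp continuous_snd).tendsto _).comp hlim).norm
  have hevx : ∀ᶠ n in atTop, ‖x n‖ < 1 := hxn.eventually (gt_mem_nhds one_pos)
  have hevz : ∀ᶠ n in atTop, ‖z n‖ < 1 := hzn.eventually (gt_mem_nhds one_pos)
  apply squeeze_zero' (g := fun n => (b:ℝ) * ‖x n‖)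
  · filter_upwards with n
    exact div_nonneg (norm_nonneg _) (nrm3C_nonneg' _ _ _)
  · filter_upwards [hevx, hevz] with n hxδ hzδ
    set X := x n
    set Y := y n
    set Z := z n
    have hfy1 : ‖fyC 1 Y‖ = 1 := by simp [fyC]
    have hG1 : (1:ℝ) ≤ gradNormC 1 b c d X Y Z := by
      rw [← hfy1]; exact fy_le_grad 1 b c d X Y Z
    have hfzn : ‖fzC b c X Z‖ = (b:ℝ) * (‖Z‖^(b-1) * ‖X‖^c) := by
      rw [fzC, norm_mul, norm_mul, norm_neg, Complex.norm_natCast, norm_pow, norm_pow, mul_assoc]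
    have hfzb : ‖fzC b c X Z‖ ≤ (b:ℝ) * ‖X‖ := by
      rw [hfzn]
      have h1 : ‖Z‖^(b-1) ≤ 1 := pow_le_one₀ (norm_nonneg _) hzδ.le
      have h2 : ‖X‖^c ≤ ‖X‖^1 := pow_le_pow_of_le_one (norm_nonneg _) hxδ.le hc
      rw [pow_one] at h2
      refine mul_le_mul_of_nonneg_left ?_ (Nat.cast_nonneg b)
      calc ‖Z‖^(b-1) * ‖X‖^c ≤ 1 * ‖X‖^c :=
            mul_le_mul_of_nonneg_right h1 (by positivity)
        _ = ‖X‖^c := one_mul _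
        _ ≤ ‖X‖ := h2
    calc ‖fzC b c X Z‖ / gradNormC 1 b c d X Y Z ≤ ‖fzC b c X Z‖ / 1 :=
          div_le_div_of_nonneg_left (norm_nonneg _) one_pos hG1
      _ = ‖fzC b c X Z‖ := div_one _
      _ ≤ (b:ℝ) * ‖X‖ := hfzb
  · have h7 : Tendsto (fun n => (b:ℝ) * ‖x n‖) atTop (nhds ((b:ℝ) * 0)) := hxn.const_mul _
    simpa using h7

private lemma bpi_a1 (b c d : ℕ) (hb : 0 < b) (hc : 0 < c) (hd : 0 < d) :
    bpiC 1 b c d := by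
  intro x y z hX hlim hgrad
  have hxn : Tendsto (fun n => ‖x n‖) atTop (nhds 0) := by
    simpa using ((continuous_fst.tendsto _).comp hlim).norm
  have hzn : Tendsto (fun n => ‖z n‖) atTop (nhds 0) := by
    simpa using (((continuous_snd.comp continuous_snd).tendsto _).comp hlim).norm
  have hxne : ∀ n, x n ≠ 0 := fun n =>
    x_ne_zero_of_inX 1 b c d one_pos hc hd _ _ _ (hX n)
  set B1 : ℝ := ‖(1:ℂ) - (c:ℂ)‖ with hB1
  set B2 : ℝ := ‖(1:ℂ) - (d:ℂ)‖ with hB2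
  have hevx : ∀ᶠ n in atTop, ‖x n‖ < 1 := hxn.eventually (gt_mem_nhds one_pos)
  have hevz : ∀ᶠ n in atTop, ‖z n‖ < 1 := hzn.eventually (gt_mem_nhds one_pos)
  apply squeeze_zero' (g := fun n => B1 * ‖z n‖ + B2 * ‖x n‖^(d-1))
  · filter_upwards with n
    exact div_nonneg (norm_nonneg _) (mul_nonneg (nrm2C_nonneg' _ _) (nrm3C_nonneg' _ _ _))
  · filter_upwards [hevx, hevz] with n hxδ hzδ
    obtain ⟨hV, -⟩ := hX n
    set X := x n with hXdef
    set Y := y n with hYdef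
    set Z := z n with hZdef
    have ht0 : 0 < ‖X‖ := norm_pos_iff.mpr (hxne n)
    rw [pow_one] at hV
    have hfy1 : fyC 1 Y = 1 := by simp [fyC]
    have hXc1 : X * X^(c-1) = X^c := by rw [← pow_succ']; congr 1; omega
    have hXd1 : X * X^(d-1) = X^d := by rw [← pow_succ']; congr 1; omega
    have hNid : X * fxC b c d X Z + Y * fyC 1 Y
        = ((1:ℂ)-(c:ℂ))*(Z^b*X^c) + ((1:ℂ)-(d:ℂ))*X^d := by
      have e1 : X * fxC b c d X Z + Y * fyC 1 Y
          = -(c:ℂ)*Z^b*(X*X^(c-1)) - (d:ℂ)*(X*X^(d-1)) + Y := by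
        rw [fxC, hfy1]; ring
      rw [e1, hXc1, hXd1, hV]; ring
    have hNle : ‖X * fxC b c d X Z + Y * fyC 1 Y‖ ≤ (B1 * ‖Z‖ + B2 * ‖X‖^(d-1)) * ‖X‖ := by
      rw [hNid]
      have h1 : ‖((1:ℂ)-(c:ℂ))*(Z^b*X^c) + ((1:ℂ)-(d:ℂ))*X^d‖
          ≤ B1*(‖Z‖^b*‖X‖^c) + B2*‖X‖^d := by
        calc ‖((1:ℂ)-(c:ℂ))*(Z^b*X^c) + ((1:ℂ)-(d:ℂ))*X^d‖
            ≤ ‖((1:ℂ)-(c:ℂ))*(Z^b*X^c)‖ + ‖((1:ℂ)-(d:ℂ))*X^d‖ := norm_add_le _ _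
          _ = B1*(‖Z‖^b*‖X‖^c) + B2*‖X‖^d := by
              rw [norm_mul, norm_mul, norm_mul, norm_pow, norm_pow, norm_pow]
      have h2 : ‖Z‖^b*‖X‖^c ≤ ‖Z‖*‖X‖ := by
        have h3 : ‖Z‖^b ≤ ‖Z‖^1 := pow_le_pow_of_le_one (norm_nonneg _) hzδ.le hb
        have h4 : ‖X‖^c ≤ ‖X‖^1 := pow_le_pow_of_le_one (norm_nonneg _) hxδ.le hc
        rw [pow_one] at h3 h4
        calc ‖Z‖^b*‖X‖^c ≤ ‖Z‖*‖X‖^c :=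
              mul_le_mul_of_nonneg_right h3 (by positivity)
          _ ≤ ‖Z‖*‖X‖ := mul_le_mul_of_nonneg_left h4 (norm_nonneg _)
      have h5 : ‖X‖^d = ‖X‖^(d-1) * ‖X‖ := by rw [← pow_succ]; congr 1; omega
      have hB1n : 0 ≤ B1 := norm_nonneg _
      have hB2n : 0 ≤ B2 := norm_nonneg _
      calc ‖((1:ℂ)-(c:ℂ))*(Z^b*X^c) + ((1:ℂ)-(d:ℂ))*X^d‖
          ≤ B1*(‖Z‖^b*‖X‖^c) + B2*‖X‖^d := h1
        _ ≤ B1*(‖Z‖*‖X‖) + B2*(‖X‖^(d-1)*‖X‖) := by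
            rw [← h5]
            exact add_le_add (mul_le_mul_of_nonneg_left h2 hB1n) (le_refl _)
        _ = (B1 * ‖Z‖ + B2 * ‖X‖^(d-1)) * ‖X‖ := by ring
    have hG1 : (1:ℝ) ≤ gradNormC 1 b c d X Y Z := by
      have hfy1n : ‖fyC 1 Y‖ = 1 := by simp [fyC]
      rw [← hfy1n]; exact fy_le_grad 1 b c d X Y Z
    have hD1 : ‖X‖ ≤ nrm2C X Y * gradNormC 1 b c d X Y Z := by
      calc ‖X‖ = ‖X‖ * 1 := (mul_one _).symm
        _ ≤ nrm2C X Y * gradNormC 1 b c d X Y Z :=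
            mul_le_mul (le_nrm2_1 _ _) hG1 one_pos.le (nrm2C_nonneg' _ _)
    have hDpos : 0 < nrm2C X Y * gradNormC 1 b c d X Y Z := lt_of_lt_of_le ht0 hD1
    rw [div_le_iff₀ hDpos]
    calc ‖X * fxC b c d X Z + Y * fyC 1 Y‖ ≤ (B1 * ‖Z‖ + B2 * ‖X‖^(d-1)) * ‖X‖ := hNle
      _ ≤ (B1 * ‖Z‖ + B2 * ‖X‖^(d-1)) * (nrm2C X Y * gradNormC 1 b c d X Y Z) := by
          refine mul_le_mul_of_nonneg_left hD1 ?_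
          positivity
  · have h1 : Tendsto (fun n => B1 * ‖z n‖) atTop (nhds 0) := by
      have := hzn.const_mul B1; simpa using this
    have h2 : Tendsto (fun n => B2 * ‖x n‖^(d-1)) atTop (nhds 0) := by
      rcases Nat.eq_or_lt_of_le hd with h | h
      · have hB2z : B2 = 0 := by rw [hB2, ← h]; simp
        simp only [hB2z, zero_mul]
        exact tendsto_const_nhds
      · have h3 : Tendsto (fun n => ‖x n‖^(d-1)) atTop (nhds 0) := by
          have := hxn.pow (d-1)
          simpa [zero_pow (show d-1 ≠ 0 by omega)] using this
        have := h3.const_mul B2; simpa using this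
    simpa using h1.add h2

/-! ### (bπ) in the case d ≤ c, a ≥ 2 -/

set_option maxHeartbeats 1000000 in
private lemma bpi_dc (a b c d : ℕ) (ha : 2 ≤ a) (hb : 0 < b) (hc : 0 < c) (hd : 0 < d)
    (hdc : d ≤ c) : bpiC a b c d := by
  intro x y z hX hlim hgrad
  have ha0 : 0 < a := by omega
  have hxn : Tendsto (fun n => ‖x n‖) atTop (nhds 0) := by
    simpa using ((continuous_fst.tendsto _).comp hlim).norm
  have hzn : Tendsto (fun n => ‖z n‖) atTop (nhds 0) := by
    simpa using (((continuous_snd.comp continuous_snd).tendsto _).comp hlim).norm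
  have hxne : ∀ n, x n ≠ 0 := fun n => x_ne_zero_of_inX a b c d ha0 hc hd _ _ _ (hX n)
  have hdR : (0:ℝ) < (d:ℝ) := by exact_mod_cast hd
  have hcR : (0:ℝ) < (c:ℝ) := by exact_mod_cast hc
  have haR : (0:ℝ) < (a:ℝ) := by exact_mod_cast ha0
  set A1 : ℝ := ‖(a:ℂ) - (c:ℂ)‖ with hA1
  set A2 : ℝ := ‖(a:ℂ) - (d:ℂ)‖ with hA2
  have hA1n : 0 ≤ A1 := norm_nonneg _
  have hA2n : 0 ≤ A2 := norm_nonneg _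
  set δ : ℝ := min 1 (min (4:ℝ)⁻¹ ((d:ℝ)/(4*c))) with hδdef
  have hδpos : 0 < δ := by
    apply lt_min (by norm_num)
    exact lt_min (by norm_num) (by positivity)
  have hevx : ∀ᶠ n in atTop, ‖x n‖ < δ := hxn.eventually (gt_mem_nhds hδpos)
  have hevz : ∀ᶠ n in atTop, ‖z n‖ < δ := hzn.eventually (gt_mem_nhds hδpos)
  apply squeeze_zero' (g := fun n => (2*A1/(a:ℝ)) * (‖x n‖ + ‖z n‖) +
    A2*(2/(d:ℝ)+1/(a:ℝ)) * Real.sqrt (2*(2^(a-2)*‖x n‖^(2*(a-d)+2*(d-a)))^(((a:ℕ):ℝ)⁻¹)))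
  · filter_upwards with n
    exact div_nonneg (norm_nonneg _) (mul_nonneg (nrm2C_nonneg' _ _) (nrm3C_nonneg' _ _ _))
  · filter_upwards [hevx, hevz] with n hxδ hzδ
    obtain ⟨hV, -⟩ := hX n
    set X := x n with hXdef
    set Y := y n with hYdef
    set Z := z n with hZdef
    set t : ℝ := ‖X‖ with htdef
    set s : ℝ := ‖Y‖ with hsdef
    set w : ℝ := ‖Z‖ with hwdef
    have ht0 : 0 < t := norm_pos_iff.mpr (hxne n)
    have hw0 : (0:ℝ) ≤ w := norm_nonneg _
    have hs0' : (0:ℝ) ≤ s := norm_nonneg _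
    have ht1 : t ≤ 1 := le_trans hxδ.le (min_le_left _ _)
    have hw1 : w ≤ 1 := le_trans hzδ.le (min_le_left _ _)
    have hδd : δ ≤ (d:ℝ)/(4*c) := le_trans (min_le_right _ _) (min_le_right _ _)
    have hδq : δ ≤ (4:ℝ)⁻¹ := le_trans (min_le_right _ _) (min_le_left _ _)
    have hpw : w^b * t^(c-d) ≤ t + w := p_le_tw b c d hb hdc _ _ ht0.le hw0 ht1 hw1
    have hsm2 : w^b * t^(c-d) ≤ 1/2 := by
      have h0 : t + w ≤ 2*δ := by linarith
      nlinarith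
    have hsm : (c:ℝ) * (w^b * t^(c-d)) ≤ (d:ℝ)/2 := by
      have h1 : (c:ℝ) * (w^b * t^(c-d)) ≤ (c:ℝ) * (t + w) :=
        mul_le_mul_of_nonneg_left hpw (le_of_lt hcR)
      have h2 : t + w ≤ 2*((d:ℝ)/(4*c)) := by linarith
      have h3 : (c:ℝ) * (2*((d:ℝ)/(4*c))) = (d:ℝ)/2 := by field_simp; ring
      nlinarith
    obtain ⟨hfx, hslow, hshigh⟩ := core_dc a b c d ha0 hb hc hd hdc X Y Z hV hsm hsm2
    have hs0 : 0 < s := by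
      rcases eq_or_lt_of_le hs0' with h | h
      · exfalso
        have hsa : s^a = 0 := by rw [← h]; exact zero_pow ha0.ne'
        rw [hsa] at hslow
        nlinarith [pow_pos ht0 d]
      · exact h
    set G := gradNormC a b c d X Y Z with hGdef
    have hfxG : ‖fxC b c d X Z‖ ≤ G := fx_le_grad a b c d X Y Z
    have hGpos : 0 < G := by
      have h0 : (0:ℝ) < (d:ℝ)/2 * t^(d-1) := by positivity
      exact lt_of_lt_of_le (lt_of_lt_of_le h0 hfx) hfxG
    have hfyn : ‖fyC a Y‖ = (a:ℝ) * s^(a-1) := by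
      rw [fyC, norm_mul, norm_pow, Complex.norm_natCast]
    have hfyG : (a:ℝ) * s^(a-1) ≤ G := by rw [← hfyn]; exact fy_le_grad a b c d X Y Z
    set D := nrm2C X Y * G with hDdef
    have hn2t : t ≤ nrm2C X Y := le_nrm2_1 _ _
    have hn2s : s ≤ nrm2C X Y := le_nrm2_2 _ _
    have hDpos : 0 < D := mul_pos (lt_of_lt_of_le ht0 hn2t) hGpos
    -- numerator identity and bound
    have hXc1 : X * X^(c-1) = X^c := by rw [← pow_succ']; congr 1; omega
    have hXd1 : X * X^(d-1) = X^d := by rw [← pow_succ']; congr 1; omega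
    have hYa1 : Y * Y^(a-1) = Y^a := by rw [← pow_succ']; congr 1; omega
    have hNid : X * fxC b c d X Z + Y * fyC a Y
        = ((a:ℂ)-(c:ℂ))*(Z^b*X^c) + ((a:ℂ)-(d:ℂ))*X^d := by
      have e1 : X * fxC b c d X Z + Y * fyC a Y
          = -(c:ℂ)*Z^b*(X*X^(c-1)) - (d:ℂ)*(X*X^(d-1)) + (a:ℂ)*(Y*Y^(a-1)) := by
        rw [fxC, fyC]; ring
      rw [e1, hXc1, hXd1, hYa1, hV]; ring
    have hNle : ‖X * fxC b c d X Z + Y * fyC a Y‖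
        ≤ A1*((w^b*t^(c-d))*t^d) + A2*t^d := by
      rw [hNid]
      calc ‖((a:ℂ)-(c:ℂ))*(Z^b*X^c) + ((a:ℂ)-(d:ℂ))*X^d‖
          ≤ ‖((a:ℂ)-(c:ℂ))*(Z^b*X^c)‖ + ‖((a:ℂ)-(d:ℂ))*X^d‖ := norm_add_le _ _
        _ = A1*(w^b*t^c) + A2*t^d := by
            rw [norm_mul, norm_mul, norm_mul, norm_pow, norm_pow, norm_pow]
        _ = A1*((w^b*t^(c-d))*t^d) + A2*t^d := by
            rw [show t^c = t^(c-d)*t^d from by rw [← pow_add]; congr 1; omega]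
            ring
    -- first term bound
    have hDlow1 : (a:ℝ)/2 * t^d ≤ D := by
      have h1 : s * ((a:ℝ) * s^(a-1)) ≤ D :=
        mul_le_mul hn2s hfyG (by positivity) (nrm2C_nonneg' _ _)
      have h2 : s * ((a:ℝ) * s^(a-1)) = (a:ℝ) * s^a := by
        rw [show s^a = s * s^(a-1) from by rw [← pow_succ']; congr 1; omega]; ring
      have h3 : (a:ℝ)/2*t^d ≤ (a:ℝ)/2*(2*s^a) := mul_le_mul_of_nonneg_left hslow (by positivity)
      have h4 : (a:ℝ)/2*(2*s^a) = (a:ℝ)*s^a := by ring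
      linarith
    have hR1 : A1*((w^b*t^(c-d))*t^d) / D ≤ (2*A1/(a:ℝ))*(t+w) := by
      have hnum0 : 0 ≤ A1*((w^b*t^(c-d))*t^d) := by
        have := mul_nonneg (pow_nonneg hw0 b) (pow_nonneg ht0.le (c-d))
        positivity
      have hhalf : (0:ℝ) < (a:ℝ)/2 * t^d := by positivity
      have h3 : A1*((w^b*t^(c-d))*t^d) / D ≤ A1*((w^b*t^(c-d))*t^d) / ((a:ℝ)/2*t^d) :=
        div_le_div_of_nonneg_left hnum0 hhalf hDlow1
      have htd : (t:ℝ)^d ≠ 0 := (pow_pos ht0 d).ne'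
      have haR' : (a:ℝ) ≠ 0 := haR.ne'
      have h4 : A1*((w^b*t^(c-d))*t^d) / ((a:ℝ)/2*t^d) = (2*A1/(a:ℝ))*(w^b*t^(c-d)) := by
        field_simp
      rw [h4] at h3
      calc A1*((w^b*t^(c-d))*t^d) / D ≤ (2*A1/(a:ℝ))*(w^b*t^(c-d)) := h3
        _ ≤ (2*A1/(a:ℝ))*(t+w) := mul_le_mul_of_nonneg_left hpw (by positivity)
    -- second term bound
    have hR2 : A2*t^d / D ≤
        A2*(2/(d:ℝ)+1/(a:ℝ)) * Real.sqrt (2*(2^(a-2)*t^(2*(a-d)+2*(d-a)))^(((a:ℕ):ℝ)⁻¹)) := by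
      rcases lt_trichotomy a d with hlt | heq | hgt
      · -- a < d
        obtain ⟨k, rfl⟩ : ∃ k, a = k+2 := ⟨a-2, by omega⟩
        obtain ⟨m, rfl⟩ : ∃ m, d = k+m+3 := ⟨d-k-3, by omega⟩
        rw [show 2*((k+2)-(k+m+3))+2*((k+m+3)-(k+2)) = 2*m+2 by omega,
          show (k+2)-2 = k by omega]
        have h6 := td_le_lt t s k m ht0 hs0 hslow
        have hDl : ((k+2:ℕ):ℝ) * (t*s^(k+1)) ≤ D := by
          rw [show (k+2)-1 = k+1 by omega] at hfyG
          have h7 : t * ((((k+2:ℕ)):ℝ) * s^(k+1)) ≤ D :=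
            mul_le_mul hn2t hfyG (by positivity) (nrm2C_nonneg' _ _)
          calc ((k+2:ℕ):ℝ) * (t*s^(k+1)) = t * ((((k+2:ℕ)):ℝ) * s^(k+1)) := by ring
            _ ≤ D := h7
        have h8 : A2*t^(k+m+3)/D ≤
            (A2/((k+2:ℕ):ℝ)) * Real.sqrt (2*(2^k*t^(2*m+2))^(((k+2:ℕ):ℝ)⁻¹)) :=
          div_bound A2 _ _ _ _ _ hA2n (Real.sqrt_nonneg _)
            (by exact_mod_cast Nat.succ_pos (k+1)) hDpos h6 hDl
        refine le_trans h8 ?_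
        refine mul_le_mul_of_nonneg_right ?_ (Real.sqrt_nonneg _)
        have h9 : (0:ℝ) < ((k+2:ℕ):ℝ) := by exact_mod_cast Nat.succ_pos (k+1)
        have h10 : A2*(2/(((k+m+3:ℕ)):ℝ)+1/(((k+2:ℕ)):ℝ))
            = A2*(2/(((k+m+3:ℕ)):ℝ)) + A2/(((k+2:ℕ)):ℝ) := by ring
        have h11 : (0:ℝ) < ((k+m+3:ℕ):ℝ) := by positivity
        have h12 : 0 ≤ A2*(2/(((k+m+3:ℕ)):ℝ)) := by positivity
        linarith
      · -- a = d
        have hA2z : A2 = 0 := by rw [hA2, heq, sub_self, norm_zero]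
        rw [hA2z]
        simp
      · -- d < a
        obtain ⟨d1, rfl⟩ : ∃ d1, d = d1+1 := ⟨d-1, by omega⟩
        obtain ⟨e, rfl⟩ : ∃ e, a = d1+e+2 := ⟨a-d1-2, by omega⟩
        rw [show 2*((d1+e+2)-(d1+1))+2*((d1+1)-(d1+e+2)) = 2*e+2 by omega,
          show (d1+e+2)-2 = d1+e by omega]
        have h6 := td_le_gt t s d1 e ht0 hs0 hslow hshigh
        have hDl : ((d1+1:ℕ):ℝ)/2 * (s*t^d1) ≤ D := by
          rw [show (d1+1)-1 = d1 by omega] at hfx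
          have h7 : s * ‖fxC b c (d1+1) X Z‖ ≤ D :=
            mul_le_mul hn2s hfxG (norm_nonneg _) (nrm2C_nonneg' _ _)
          have h8 : s * (((d1+1:ℕ):ℝ)/2 * t^d1) ≤ s * ‖fxC b c (d1+1) X Z‖ :=
            mul_le_mul_of_nonneg_left hfx hs0'
          calc ((d1+1:ℕ):ℝ)/2 * (s*t^d1) = s * (((d1+1:ℕ):ℝ)/2 * t^d1) := by ring
            _ ≤ D := le_trans h8 h7
        have h9 : (0:ℝ) < ((d1+1:ℕ):ℝ) := by exact_mod_cast Nat.succ_pos d1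
        have h8 : A2*t^(d1+1)/D ≤
            (A2/(((d1+1:ℕ):ℝ)/2)) * Real.sqrt (2*(2^(d1+e)*t^(2*e+2))^(((d1+e+2:ℕ):ℝ)⁻¹)) :=
          div_bound A2 _ _ _ _ _ hA2n (Real.sqrt_nonneg _) (by positivity) hDpos h6 hDl
        refine le_trans h8 ?_
        refine mul_le_mul_of_nonneg_right ?_ (Real.sqrt_nonneg _)
        have h10 : A2/(((d1+1:ℕ):ℝ)/2) = A2*(2/((d1+1:ℕ):ℝ)) := by
          field_simp
        have h11 : (0:ℝ) < ((d1+e+2:ℕ):ℝ) := by exact_mod_cast Nat.succ_pos (d1+e+1)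
        have h12 : 0 ≤ A2/((d1+e+2:ℕ):ℝ) := by positivity
        have h13 : A2*(2/((d1+1:ℕ):ℝ)+1/((d1+e+2:ℕ):ℝ))
            = A2*(2/((d1+1:ℕ):ℝ)) + A2/((d1+e+2:ℕ):ℝ) := by ring
        linarith
    -- combine
    calc ‖X * fxC b c d X Z + Y * fyC a Y‖ / D
        ≤ (A1*((w^b*t^(c-d))*t^d) + A2*t^d) / D := by gcongr
      _ = A1*((w^b*t^(c-d))*t^d)/D + A2*t^d/D := add_div _ _ _
      _ ≤ (2*A1/(a:ℝ))*(t+w) +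
          A2*(2/(d:ℝ)+1/(a:ℝ)) * Real.sqrt (2*(2^(a-2)*t^(2*(a-d)+2*(d-a)))^(((a:ℕ):ℝ)⁻¹)) :=
          add_le_add hR1 hR2
  · -- the bound tends to 0
    have hpart1 : Tendsto (fun n => (2*A1/(a:ℝ)) * (‖x n‖ + ‖z n‖)) atTop (nhds 0) := by
      have := (hxn.add hzn).const_mul (2*A1/(a:ℝ))
      simpa using this
    have hpart2 : Tendsto (fun n =>
        A2*(2/(d:ℝ)+1/(a:ℝ)) * Real.sqrt (2*(2^(a-2)*‖x n‖^(2*(a-d)+2*(d-a)))^(((a:ℕ):ℝ)⁻¹)))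
        atTop (nhds 0) := by
      rcases eq_or_ne a d with heq | hne
      · have hA2z : A2 = 0 := by rw [hA2, heq, sub_self, norm_zero]
        simp only [hA2z, zero_mul]
        exact tendsto_const_nhds
      · have hE : 2*(a-d)+2*(d-a) ≠ 0 := by omega
        have h1 : Tendsto (fun n => ‖x n‖^(2*(a-d)+2*(d-a))) atTop (nhds 0) := by
          have := hxn.pow (2*(a-d)+2*(d-a))
          simpa [zero_pow hE] using this
        have h2 : Tendsto (fun n => (2:ℝ)^(a-2)*‖x n‖^(2*(a-d)+2*(d-a))) atTop (nhds 0) := by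
          have := h1.const_mul ((2:ℝ)^(a-2))
          simpa using this
        have h3 : Tendsto (fun n => ((2:ℝ)^(a-2)*‖x n‖^(2*(a-d)+2*(d-a)))^(((a:ℕ):ℝ)⁻¹))
            atTop (nhds 0) := by
          have h4 := h2.rpow_const (p := ((a:ℕ):ℝ)⁻¹) (Or.inr (by positivity))
          rwa [Real.zero_rpow (inv_ne_zero (Nat.cast_ne_zero.mpr ha0.ne'))] at h4
        have h5 : Tendsto (fun n =>
            (2:ℝ)*((2:ℝ)^(a-2)*‖x n‖^(2*(a-d)+2*(d-a)))^(((a:ℕ):ℝ)⁻¹)) atTop (nhds 0) := by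
          have := h3.const_mul (2:ℝ)
          simpa using this
        have h6 := h5.sqrt
        rw [Real.sqrt_zero] at h6
        have := h6.const_mul (A2*(2/(d:ℝ)+1/(a:ℝ)))
        simpa using this
    have := hpart1.add hpart2
    simpa using this

/-! ### Necessity: if a ≥ 2 and c < d then (b)-regularity fails. -/

set_option maxHeartbeats 1000000 in
private lemma notB (a b c e : ℕ) (ha : 2 ≤ a) (hb : 0 < b) (hc : 0 < c) :
    ¬ bRegC a b c (c+e+1) := by
  intro hB
  obtain ⟨c1, rfl⟩ : ∃ c1, c = c1+1 := ⟨c-1, by omega⟩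
  set ζ : ℂ := Complex.exp (Real.pi * Complex.I / b) with hζ
  have hζb : ζ^b = -1 := by
    rw [hζ, ← Complex.exp_nat_mul, mul_div_cancel₀ _ (show (b:ℂ) ≠ 0 by exact_mod_cast hb.ne')]
    exact Complex.exp_pi_mul_I
  set u : ℕ → ℝ := fun n => ((n:ℝ)+1)⁻¹ with hu
  have hu0 : ∀ n, 0 < u n := fun n => by positivity
  have hulim : Tendsto u atTop (nhds 0) := by
    apply Tendsto.inv_tendsto_atTop
    exact tendsto_atTop_add_const_right _ 1 tendsto_natCast_atTop_atTop
  set x : ℕ → ℂ := fun n => ((u n : ℂ))^b with hx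
  set y : ℕ → ℂ := fun _ => (0:ℂ) with hy
  set z : ℕ → ℂ := fun n => ζ * ((u n : ℂ))^(e+1) with hz
  have hune : ∀ n, ((u n : ℝ) : ℂ) ≠ 0 := fun n => Complex.ofReal_ne_zero.mpr (hu0 n).ne'
  have hxne : ∀ n, x n ≠ 0 := fun n => pow_ne_zero _ (hune n)
  have hzbx : ∀ n, (z n)^b * (x n)^(c1+1) + (x n)^(c1+1+e+1) = 0 := by
    intro n
    rw [hz, hx, mul_pow, hζb]
    ring
  have hX : ∀ n, inXC a b (c1+1) (c1+1+e+1) (x n) (y n) (z n) := by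
    intro n
    constructor
    · rw [hy]
      rw [zero_pow (show a ≠ 0 by omega)]
      have := hzbx n
      linear_combination -this
    · intro h
      exact hxne n h.1
  have hfxeq : ∀ n, fxC b (c1+1) (c1+1+e+1) (x n) (z n)
      = (((c1+1:ℕ):ℂ) - ((c1+1+e+1:ℕ):ℂ)) * (x n)^(c1+e+1) := by
    intro n
    rw [fxC, hx, hz, mul_pow, hζb]
    rw [show c1+1-1 = c1 by omega, show c1+1+e+1-1 = c1+e+1 by omega]
    push_cast
    ring
  have hfxne : ∀ n, fxC b (c1+1) (c1+1+e+1) (x n) (z n) ≠ 0 := by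
    intro n
    rw [hfxeq n]
    apply mul_ne_zero
    · rw [sub_ne_zero]
      intro h
      have : (c1+1 : ℕ) = (c1+1+e+1 : ℕ) := by exact_mod_cast h
      omega
    · exact pow_ne_zero _ (hxne n)
  have hgrad : ∀ n, gradNeC a b (c1+1) (c1+1+e+1) (x n) (y n) (z n) :=
    fun n h => hfxne n h.1
  have hUlim : Tendsto (fun n => ((u n : ℝ):ℂ)) atTop (nhds 0) := by
    have h := (Complex.continuous_ofReal.tendsto 0).comp hulim
    rw [Complex.ofReal_zero] at h
    exact h
  have hxlim : Tendsto x atTop (nhds 0) := by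
    have := hUlim.pow b
    simpa [hx, zero_pow hb.ne'] using this
  have hylim : Tendsto y atTop (nhds 0) := tendsto_const_nhds
  have hzlim : Tendsto z atTop (nhds 0) := by
    have h1 := hUlim.pow (e+1)
    have h2 := (tendsto_const_nhds (x := ζ) (f := atTop (α := ℕ))).mul h1
    simpa [hz, zero_pow (show e+1 ≠ 0 by omega)] using h2
  have hlim : Tendsto (fun n => (x n, y n, z n)) atTop
      (nhds ((0:ℂ), (0:ℂ), (0:ℂ))) :=
    hxlim.prodMk_nhds (hylim.prodMk_nhds hzlim)
  have h1 := hB.1 x y z hX hlim hgrad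
  have h2 := hB.2 x y z hX hlim hgrad
  have hkey : ∀ n,
      (‖fzC b (c1+1) (x n) (z n)‖ / gradNormC a b (c1+1) (c1+1+e+1) (x n) (y n) (z n))^2
      + (‖x n * fxC b (c1+1) (c1+1+e+1) (x n) (z n) + y n * fyC a (y n)‖ /
        (nrm2C (x n) (y n) * gradNormC a b (c1+1) (c1+1+e+1) (x n) (y n) (z n)))^2 = 1 := by
    intro n
    have hfy0 : fyC a (y n) = 0 := by
      rw [hy]
      simp [fyC, zero_pow (show a-1 ≠ 0 by omega)]
    have ht0 : (0:ℝ) < ‖x n‖ := norm_pos_iff.mpr (hxne n)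
    have hnum : ‖x n * fxC b (c1+1) (c1+1+e+1) (x n) (z n) + y n * fyC a (y n)‖
        = ‖x n‖ * ‖fxC b (c1+1) (c1+1+e+1) (x n) (z n)‖ := by
      rw [hy]
      simp [norm_mul]
    have hnrm2 : nrm2C (x n) (y n) = ‖x n‖ := by
      rw [hy, nrm2C]
      simp [Real.sqrt_sq (norm_nonneg (x n))]
    have hG2 : gradNormC a b (c1+1) (c1+1+e+1) (x n) (y n) (z n)^2
        = ‖fxC b (c1+1) (c1+1+e+1) (x n) (z n)‖^2 + ‖fzC b (c1+1) (x n) (z n)‖^2 := by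
      rw [gradNormC, nrm3C, hfy0, norm_zero, Real.sq_sqrt (by positivity)]
      ring
    have hFpos : 0 < ‖fxC b (c1+1) (c1+1+e+1) (x n) (z n)‖ :=
      norm_pos_iff.mpr (hfxne n)
    have hGpos : 0 < gradNormC a b (c1+1) (c1+1+e+1) (x n) (y n) (z n) := by
      have h3 : (0:ℝ) < gradNormC a b (c1+1) (c1+1+e+1) (x n) (y n) (z n)^2 := by
        rw [hG2]; positivity
      have h4 : (0:ℝ) ≤ gradNormC a b (c1+1) (c1+1+e+1) (x n) (y n) (z n) :=
        nrm3C_nonneg' _ _ _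
      rcases h4.lt_or_eq with h5 | h5
      · exact h5
      · exfalso; rw [← h5] at h3; norm_num at h3
    rw [hnum, hnrm2, mul_div_mul_left _ _ ht0.ne']
    rw [div_pow, div_pow, ← add_div]
    rw [hG2]
    rw [add_comm (‖fzC b (c1+1) (x n) (z n)‖^2)]
    exact div_self (by positivity)
  have h3 : Tendsto (fun n =>
      (‖fzC b (c1+1) (x n) (z n)‖ / gradNormC a b (c1+1) (c1+1+e+1) (x n) (y n) (z n))^2
      + (‖x n * fxC b (c1+1) (c1+1+e+1) (x n) (z n) + y n * fyC a (y n)‖ /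
        (nrm2C (x n) (y n) * gradNormC a b (c1+1) (c1+1+e+1) (x n) (y n) (z n)))^2)
      atTop (nhds 0) := by
    have := (h1.pow 2).add (h2.pow 2)
    simpa using this
  have h4 : Tendsto (fun _ : ℕ => (1:ℝ)) atTop (nhds 0) := h3.congr hkey
  exact absurd (tendsto_nhds_unique h4 tendsto_const_nhds) (by norm_num)

/-- Whitney (b)-regularity classification for y^a = z^b x^c + x^d in ℂ³ (Diagram 3). -/
theorem whitney_b_complex (a b c d : ℕ) (ha : 0 < a) (hb : 0 < b) (hc : 0 < c) (hd : 0 < d) :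
    bRegC a b c d ↔ a = 1 ∨ d ≤ c := by
  constructor
  · intro h
    by_contra hcon
    push_neg at hcon
    obtain ⟨ha1, hdc⟩ := hcon
    have ha2 : 2 ≤ a := by omega
    have hcd : c < d := by omega
    obtain ⟨e, rfl⟩ : ∃ e, d = c+e+1 := ⟨d-c-1, by omega⟩
    exact notB a b c e ha2 hb hc h
  · rintro (rfl | hdc)
    · exact ⟨aReg_a1 b c d hb hc hd, bpi_a1 b c d hb hc hd⟩
    · by_cases ha1 : a = 1
      · subst ha1
        exact ⟨aReg_a1 b c d hb hc hd, bpi_a1 b c d hb hc hd⟩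
      · have ha2 : 2 ≤ a := by omega
        exact ⟨aReg_dc a b c d ha hb hc hd hdc, bpi_dc a b c d ha2 hb hc hd hdc⟩

end
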